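/- Let Φ be a left permutive cellular automaton with no memory such that Φ^j has positive anticipation, and let (z_1, z_2, ...) be Φ_R-fixed. Then Fix(Φ^j) ∩ {x : x_i = z_i for all i ≥ 1} is a closed, nowhere dense subset of {x : x_i = z_i for all i ≥ 1}. -/
import Mathlib


/-- Left permutive local rule. -/
def LeftPermutive {A : Type*} {r : ℕ} (φ : (Fin (r + 1) → A) → A) : Prop :=
  ∀ t : Fin r → A, Function.Bijective fun a : A => φ (Fin.cons a t)

/-- `Φ` is the two-sided cellular automaton on `A^ℤ` induced by the local rule `φ`. -/
def IsCA {A : Type*} {r : ℕ} (φ : (Fin (r + 1) → A) → A) (Φ : (ℤ → A) → ℤ → A) : Prop :=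
  ∀ x i, Φ x i = φ fun j : Fin (r + 1) => x (i + (j : ℕ))

/-- `ΦR` is the one-sided cellular automaton on `A^ℕ` induced by the local rule `φ`. -/
def IsCAR {A : Type*} {r : ℕ} (φ : (Fin (r + 1) → A) → A) (ΦR : (ℕ → A) → ℕ → A) : Prop :=
  ∀ x i, ΦR x i = φ fun j : Fin (r + 1) => x (i + (j : ℕ))

/-- A memoryless map `F` on `A^ℤ` has zero anticipation if it is induced coordinatewise
by a single map of the alphabet; positive anticipation is the negation of this. -/
def ZeroAnticipation {A : Type*} (F : (ℤ → A) → ℤ → A) : Prop :=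
  ∃ ψ : A → A, ∀ x i, F x i = ψ (x i)

/-- The set `C = {x : x_i = z_i for all i ≥ 1}` (here `z n` plays the role of
`z_{n+1}`). -/
def rightCyl {A : Type*} (z : ℕ → A) : Set (ℤ → A) :=
  {x | ∀ n : ℕ, x ((n : ℤ) + 1) = z n}


/-- The value of `Φ^[j] x` at `i` only depends on the translated window. -/
lemma iterate_window {A : Type*} {r : ℕ} {φ : (Fin (r + 1) → A) → A}
    {Φ : (ℤ → A) → ℤ → A} (hΦ : IsCA φ Φ) :
    ∀ (j : ℕ) (x y : ℤ → A) (i m : ℤ),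
      (∀ k : ℕ, k ≤ j * r → x (i + (k : ℤ)) = y (m + (k : ℤ))) →
      Φ^[j] x i = Φ^[j] y m := by
  intro j
  induction j with
  | zero =>
    intro x y i m h
    simpa using h 0 (Nat.zero_le _)
  | succ n ih =>
    intro x y i m h
    rw [Function.iterate_succ_apply, Function.iterate_succ_apply]
    apply ih
    intro k hk
    rw [hΦ, hΦ]
    congr 1
    funext l
    have hl : (l : ℕ) ≤ r := Nat.lt_succ_iff.mp l.isLt
    have hkl : k + (l : ℕ) ≤ (n + 1) * r := by
      calc k + (l : ℕ) ≤ n * r + r := Nat.add_le_add hk hl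
        _ = (n + 1) * r := by ring
    have := h (k + (l : ℕ)) hkl
    push_cast at this
    convert this using 2 <;> ring

/-- Continuity of a cellular automaton. -/
lemma isCA_continuous {A : Type*} [TopologicalSpace A] [DiscreteTopology A] {r : ℕ}
    {φ : (Fin (r + 1) → A) → A} {Φ : (ℤ → A) → ℤ → A} (hΦ : IsCA φ Φ) :
    Continuous Φ := by
  apply continuous_pi
  intro i
  have : (fun x : ℤ → A => Φ x i) = fun x => φ fun j : Fin (r + 1) => x (i + (j : ℕ)) :=
    funext fun x => hΦ x i
  rw [this]
  exact (continuous_of_discreteTopology (f := φ)).comp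
    (continuous_pi fun l => continuous_apply _)


/-- If `Φ^j` has positive anticipation and `(z_1,z_2,...)` is `Φ_R`-fixed, then
`Fix(Φ^j) ∩ C` is a closed, nowhere dense subset of `C = {x : x_i = z_i, i ≥ 1}`. -/
theorem fix_closed_nowhereDense_in_fiber {A : Type*} [Fintype A] [TopologicalSpace A]
    [DiscreteTopology A] {r : ℕ}
    (φ : (Fin (r + 1) → A) → A) (Φ : (ℤ → A) → ℤ → A) (ΦR : (ℕ → A) → ℕ → A)
    (hΦ : IsCA φ Φ) (hΦR : IsCAR φ ΦR) (hlp : LeftPermutive φ)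
    (j : ℕ) (hj : 1 ≤ j) (hpos : ¬ ZeroAnticipation Φ^[j])
    (z : ℕ → A) (hz : ΦR z = z) :
    IsClosed {x : rightCyl z | Φ^[j] (x : ℤ → A) = (x : ℤ → A)} ∧
      IsNowhereDense {x : rightCyl z | Φ^[j] (x : ℤ → A) = (x : ℤ → A)} := by
  classical
  have hcont : Continuous Φ^[j] := (isCA_continuous hΦ).iterate j
  have hclosedAmb : IsClosed {x : ℤ → A | Φ^[j] x = x} :=
    isClosed_eq hcont continuous_id
  have hclosed : IsClosed {x : rightCyl z | Φ^[j] (x : ℤ → A) = (x : ℤ → A)} :=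
    hclosedAmb.preimage continuous_subtype_val
  refine ⟨hclosed, ?_⟩
  rw [hclosed.isNowhereDense_iff]
  rw [Set.eq_empty_iff_forall_notMem]
  intro p hp
  apply hpos
  rw [mem_interior] at hp
  obtain ⟨t, htS, hto, hpt⟩ := hp
  rw [isOpen_induced_iff] at hto
  obtain ⟨V, hVo, rfl⟩ := hto
  obtain ⟨I, u, hu, hpi⟩ := isOpen_pi_iff.mp hVo p.val hpt
  set L : ℤ := (insert (0:ℤ) I).min' (Finset.insert_nonempty _ _) with hL
  have hL0 : L ≤ 0 := Finset.min'_le _ _ (Finset.mem_insert_self _ _)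
  set m : ℤ := L - ((j * r : ℕ) + 1) with hm
  have hmjr : m + (j * r : ℕ) < L := by simp [hm]; omega
  refine ⟨id, fun x i => ?_⟩
  -- construct the point y of the cylinder carrying the window of x at i
  set y : ℤ → A := fun s => if m ≤ s ∧ s ≤ m + (j * r : ℕ) then x (i + (s - m)) else p.val s
    with hy
  have hyout : ∀ s : ℤ, L ≤ s → y s = p.val s := by
    intro s hs
    have : ¬ (m ≤ s ∧ s ≤ m + (j * r : ℕ)) := by
      rintro ⟨-, h2⟩; omega
    simp only [hy]
    exact if_neg this
  have hyC : y ∈ rightCyl z := by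
    intro n
    have h1 : L ≤ (n : ℤ) + 1 := by
      have : (0:ℤ) ≤ (n : ℤ) := Int.natCast_nonneg n
      omega
    rw [hyout _ h1]
    exact p.2 n
  have hyV : y ∈ V := by
    apply hpi
    intro a ha
    have hLa : L ≤ a := Finset.min'_le _ _ (Finset.mem_insert_of_mem ha)
    rw [hyout a hLa]
    exact (hu a ha).2
  have hymem : (⟨y, hyC⟩ : rightCyl z) ∈ {x : rightCyl z | Φ^[j] (x : ℤ → A) = (x : ℤ → A)} :=
    htS hyV
  have hfix : Φ^[j] y = y := hymem
  have hwin : ∀ k : ℕ, k ≤ j * r → x (i + (k : ℤ)) = y (m + (k : ℤ)) := by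
    intro k hk
    have hc : m ≤ m + (k : ℤ) ∧ m + (k : ℤ) ≤ m + (j * r : ℕ) := by
      constructor
      · have : (0:ℤ) ≤ (k : ℤ) := Int.natCast_nonneg k
        omega
      · have : (k : ℤ) ≤ (j * r : ℕ) := by exact_mod_cast hk
        omega
    simp only [hy, hc, if_true, and_self]
    congr 1
    ring
  calc Φ^[j] x i = Φ^[j] y m := iterate_window hΦ j x y i m hwin
    _ = y m := congrFun hfix m
    _ = x (i + (m - m)) := by
        have hc : m ≤ m ∧ m ≤ m + (j * r : ℕ) :=
          ⟨le_refl m, le_add_of_nonneg_right (Int.natCast_nonneg _)⟩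
        simp only [hy]
        rw [if_pos hc]
    _ = id (x i) := by simp
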